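/- Let α, β > 0 and γ = 0, and let (u,f) ∈ X be a minimizer of I(u,f) = ∫₀^∞ [2 u'² + (1−u²)²/r² + α r² f'² + αβ f² u²] dr over X which solves u'' = (αβ/2) f² u + u(u²−1)/r² and (r² f')' = β f u² on (0,∞) with 0 < u(r) < 1 and 0 < f(r) < 1 for all r > 0. Then f'(r) > 0 for all r > 0 (f strictly increases) and u is strictly decreasing on (0,∞). -/

import Mathlib

open MeasureTheory Filter Set Topology

noncomputable section

/-- `g` is absolutely continuous on every compact subinterval of `(0,∞)`,
with almost-everywhere derivative `g'`. -/
def LocAC (g g' : ℝ → ℝ) : Prop :=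
  ∀ a b : ℝ, 0 < a → a ≤ b →
    IntervalIntegrable g' volume a b ∧ g b - g a = ∫ t in a..b, g' t

/-- The integrand of the `γ = 0` energy functional
`I(u,f) = ∫₀^∞ [2 u'² + (1−u²)²/r² + α r² f'² + αβ f² u²] dr`. -/
def dmIntegrand0 (α β : ℝ) (u u' f f' : ℝ → ℝ) (r : ℝ) : ℝ :=
  2 * u' r ^ 2 + (1 - u r ^ 2) ^ 2 / r ^ 2
    + α * r ^ 2 * f' r ^ 2 + α * β * f r ^ 2 * u r ^ 2

/-- The `γ = 0` energy `I(u,f)`. -/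
def dmEnergy0 (α β : ℝ) (u u' f f' : ℝ → ℝ) : ℝ :=
  ∫ r in Ioi (0 : ℝ), dmIntegrand0 α β u u' f f' r

/-- The admissible class `X` for `γ = 0`. -/
def dmAdm0 (α β : ℝ) (u u' f f' : ℝ → ℝ) : Prop :=
  LocAC u u' ∧ LocAC f f' ∧
    IntegrableOn (dmIntegrand0 α β u u' f f') (Ioi 0) ∧
    Tendsto u (𝓝[>] (0 : ℝ)) (𝓝 1) ∧ Tendsto f (𝓝[>] (0 : ℝ)) (𝓝 0) ∧
    Tendsto u atTop (𝓝 0) ∧ Tendsto f atTop (𝓝 1)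

/-- If `h c = 0` and `h` has negative derivative at `c`, then `h < 0` just right of `c`. -/
lemma aux_ev_right_neg {h : ℝ → ℝ} {d c : ℝ} (hd : HasDerivAt h d c)
    (h0 : h c = 0) (hneg : d < 0) : ∀ᶠ x in 𝓝[>] c, h x < 0 := by
  have hs : Tendsto (slope h c) (𝓝[>] c) (𝓝 d) :=
    (hasDerivAt_iff_tendsto_slope.mp hd).mono_left
      (nhdsWithin_mono _ fun x hx => ne_of_gt hx)
  filter_upwards [hs.eventually (eventually_lt_nhds hneg), self_mem_nhdsWithin]
    with x hx hx'
  have hxc : (0:ℝ) < x - c := sub_pos.mpr hx'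
  have hne : x - c ≠ 0 := ne_of_gt hxc
  have h1 : (h x - h c) / (x - c) < 0 := by rwa [slope_def_field] at hx
  have h2 : (h x - h c) / (x - c) * (x - c) < 0 := mul_neg_of_neg_of_pos h1 hxc
  rw [div_mul_cancel₀ _ hne] at h2
  linarith [h2, h0.ge]

/-- If `h c = 0` and `h` has negative derivative at `c`, then `h > 0` just left of `c`. -/
lemma aux_ev_left_pos {h : ℝ → ℝ} {d c : ℝ} (hd : HasDerivAt h d c)
    (h0 : h c = 0) (hneg : d < 0) : ∀ᶠ x in 𝓝[<] c, 0 < h x := by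
  have hs : Tendsto (slope h c) (𝓝[<] c) (𝓝 d) :=
    (hasDerivAt_iff_tendsto_slope.mp hd).mono_left
      (nhdsWithin_mono _ fun x hx => ne_of_lt hx)
  filter_upwards [hs.eventually (eventually_lt_nhds hneg), self_mem_nhdsWithin]
    with x hx hx'
  have hxc : x - c < 0 := sub_neg.mpr hx'
  have hne : x - c ≠ 0 := ne_of_lt hxc
  have h1 : (h x - h c) / (x - c) < 0 := by rwa [slope_def_field] at hx
  have h2 : 0 < (h x - h c) / (x - c) * (x - c) := mul_pos_of_neg_of_neg h1 hxc
  rw [div_mul_cancel₀ _ hne] at h2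
  linarith [h2, h0.le]

/-- If `h c = 0` and `h` has positive derivative at `c`, then `h > 0` just right of `c`. -/
lemma aux_ev_right_pos {h : ℝ → ℝ} {d c : ℝ} (hd : HasDerivAt h d c)
    (h0 : h c = 0) (hpos : 0 < d) : ∀ᶠ x in 𝓝[>] c, 0 < h x := by
  have := aux_ev_right_neg hd.neg (by simp [h0]) (by linarith)
  filter_upwards [this] with x hx
  simpa using hx

/-- If `h c = 0` and `h` has positive derivative at `c`, then `h < 0` just left of `c`. -/
lemma aux_ev_left_neg {h : ℝ → ℝ} {d c : ℝ} (hd : HasDerivAt h d c)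
    (h0 : h c = 0) (hpos : 0 < d) : ∀ᶠ x in 𝓝[<] c, h x < 0 := by
  have := aux_ev_left_pos hd.neg (by simp [h0]) (by linarith)
  filter_upwards [this] with x hx
  simpa using hx

/-- an energy minimizer solving the `γ = 0` equations with
`0 < u < 1`, `0 < f < 1` has `f' > 0` on `(0,∞)` and `u` strictly decreasing. -/
theorem minimizer_monotonicity (α β : ℝ) (hα : 0 < α) (hβ : 0 < β)
    (u u' f f' : ℝ → ℝ)
    (hadm : dmAdm0 α β u u' f f')
    (hmin : ∀ v v' g g' : ℝ → ℝ, dmAdm0 α β v v' g g' →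
      dmEnergy0 α β u u' f f' ≤ dmEnergy0 α β v v' g g')
    (hode : ∀ r : ℝ, 0 < r →
      HasDerivAt u (u' r) r ∧ HasDerivAt f (f' r) r ∧
      HasDerivAt u' (α * β / 2 * f r ^ 2 * u r + u r * (u r ^ 2 - 1) / r ^ 2) r ∧
      HasDerivAt (fun s : ℝ => s ^ 2 * f' s) (β * f r * u r ^ 2) r)
    (hbounds : ∀ r : ℝ, 0 < r → 0 < u r ∧ u r < 1 ∧ 0 < f r ∧ f r < 1) :
    (∀ r : ℝ, 0 < r → 0 < f' r) ∧ StrictAntiOn u (Ioi 0) := by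
  obtain ⟨-, -, -, hu0, hf0, huT, -⟩ := hadm
  have hu : ∀ r : ℝ, 0 < r → HasDerivAt u (u' r) r := fun r hr => (hode r hr).1
  have hf : ∀ r : ℝ, 0 < r → HasDerivAt f (f' r) r := fun r hr => (hode r hr).2.1
  set U2 : ℝ → ℝ := fun r => α * β / 2 * f r ^ 2 * u r + u r * (u r ^ 2 - 1) / r ^ 2
    with hU2
  have hu' : ∀ r : ℝ, 0 < r → HasDerivAt u' (U2 r) r := fun r hr => (hode r hr).2.2.1
  have hg : ∀ r : ℝ, 0 < r → HasDerivAt (fun s : ℝ => s ^ 2 * f' s) (β * f r * u r ^ 2) r :=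
    fun r hr => (hode r hr).2.2.2
  -- Step A : f' > 0 on (0,∞)
  have hfpos : ∀ r : ℝ, 0 < r → 0 < f' r := by
    intro c hc
    by_contra hcon
    push_neg at hcon
    have hgc : c ^ 2 * f' c ≤ 0 := mul_nonpos_of_nonneg_of_nonpos (by positivity) hcon
    have hglt : ∀ r, 0 < r → r < c → r ^ 2 * f' r < c ^ 2 * f' c := by
      intro r hr hrc
      obtain ⟨ξ, hξ, hξ2⟩ := exists_hasDerivAt_eq_slope (fun s : ℝ => s ^ 2 * f' s)
        (fun s => β * f s * u s ^ 2) hrc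
        (fun x hx => ((hg x (lt_of_lt_of_le hr hx.1)).continuousAt).continuousWithinAt)
        (fun x hx => hg x (hr.trans hx.1))
      have hξpos : 0 < ξ := hr.trans hξ.1
      have hpos : 0 < β * f ξ * u ξ ^ 2 := by
        have h1 := (hbounds ξ hξpos).1
        have h2 := (hbounds ξ hξpos).2.2.1
        positivity
      rw [hξ2] at hpos
      have hcr : (0:ℝ) < c - r := sub_pos.mpr hrc
      rcases div_pos_iff.mp hpos with ⟨h', _⟩ | ⟨_, h'⟩
      · linarith
      · linarith
    have hf'neg : ∀ r, 0 < r → r < c → f' r < 0 := by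
      intro r hr hrc
      have h5 : r ^ 2 * f' r < 0 := lt_of_lt_of_le (hglt r hr hrc) hgc
      by_contra hcon2
      push_neg at hcon2
      have : 0 ≤ r ^ 2 * f' r := mul_nonneg (by positivity) hcon2
      linarith
    have htpos : 0 < c / 2 := by positivity
    have htc : c / 2 < c := by linarith
    have hkey : ∀ s, 0 < s → s < c / 2 → f (c / 2) < f s := by
      intro s hs hst
      obtain ⟨ξ, hξ, hξ2⟩ := exists_hasDerivAt_eq_slope f f' hst
        (fun x hx => ((hf x (lt_of_lt_of_le hs hx.1)).continuousAt).continuousWithinAt)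
        (fun x hx => hf x (hs.trans hx.1))
      have h6 : f' ξ < 0 := hf'neg ξ (hs.trans hξ.1) (hξ.2.trans htc)
      have hts : 0 < c / 2 - s := sub_pos.mpr hst
      rw [hξ2] at h6
      rcases div_neg_iff.mp h6 with ⟨_, h'⟩ | ⟨h', _⟩
      · linarith
      · linarith
    have hev : ∀ᶠ s in 𝓝[>] (0:ℝ), f (c / 2) ≤ f s := by
      filter_upwards [Ioo_mem_nhdsGT htpos] with s hs
      exact le_of_lt (hkey s hs.1 hs.2)
    have hle : f (c / 2) ≤ 0 := ge_of_tendsto hf0 hev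
    have := (hbounds (c / 2) htpos).2.2.1
    linarith
  -- f is strictly increasing on (0,∞)
  have hfmono : StrictMonoOn f (Ioi (0:ℝ)) := by
    apply strictMonoOn_of_deriv_pos (convex_Ioi 0)
    · exact fun x hx => ((hf x hx).continuousAt).continuousWithinAt
    · intro x hx
      rw [interior_Ioi] at hx
      rw [(hf x hx).deriv]
      exact hfpos x hx
  -- Step B : u' ≤ 0 on (0,∞)
  have hune : ∀ r : ℝ, 0 < r → u' r ≤ 0 := by
    intro c hc
    by_contra hcon
    push_neg at hcon
    obtain ⟨uc0, uc1, -, -⟩ := hbounds c hc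
    -- a point ε ∈ (0,c) with u ε > u c
    obtain ⟨ε, hε1, hε2⟩ := ((hu0.eventually (eventually_gt_nhds uc1)).and
      (eventually_of_mem (Ioo_mem_nhdsGT hc) fun x hx => hx)).exists
    -- a point x₀ ∈ (ε,c) with u x₀ < u c
    have hdiff : HasDerivAt (fun x => u x - u c) (u' c) c := (hu c hc).sub_const (u c)
    obtain ⟨x₀, hx₀1, hx₀2⟩ := ((aux_ev_left_neg hdiff (by simp) hcon).and
      (eventually_of_mem (Ioo_mem_nhdsLT hε2.2) fun x hx => hx)).exists
    -- a point d > c with u d > u c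
    obtain ⟨d, hd1, hd2⟩ := ((aux_ev_right_pos hdiff (by simp) hcon).and
      (eventually_of_mem (Ioo_mem_nhdsGT (lt_add_one c)) fun x hx => hx)).exists
    -- a point R > d with u R < u c
    obtain ⟨R, hR1, hR2⟩ := ((huT.eventually (eventually_lt_nhds uc0)).and
      (eventually_gt_atTop d)).exists
    have hεpos : 0 < ε := hε2.1
    have hεc : ε < c := hε2.2
    have hcd : c < d := hd2.1
    have hdR : d < R := hR2
    -- minimum of u on [ε, c]
    obtain ⟨r₀, hr₀mem, hr₀min⟩ := isCompact_Icc.exists_isMinOn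
      (nonempty_Icc.mpr hεc.le)
      (fun x hx => ((hu x (lt_of_lt_of_le hεpos hx.1)).continuousAt).continuousWithinAt)
    have hr₀lt : u r₀ < u c := by
      have := hr₀min ⟨hx₀2.1.le, hx₀2.2.le⟩
      simp only [mem_setOf_eq] at this
      linarith [hx₀1]
    have hr₀Ioo : r₀ ∈ Ioo ε c := by
      constructor
      · rcases hr₀mem.1.lt_or_eq with h1 | h1
        · exact h1
        · exfalso; rw [← h1] at hr₀lt; linarith [hε1]
      · rcases hr₀mem.2.lt_or_eq with h2 | h2
        · exact h2
        · exfalso; rw [h2] at hr₀lt; exact lt_irrefl _ hr₀lt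
    have hr₀pos : 0 < r₀ := hεpos.trans hr₀Ioo.1
    have hr₀loc : IsLocalMin u r₀ := hr₀min.isLocalMin (Icc_mem_nhds hr₀Ioo.1 hr₀Ioo.2)
    -- maximum of u on [c, R]
    obtain ⟨r₁, hr₁mem, hr₁max⟩ := isCompact_Icc.exists_isMaxOn
      (nonempty_Icc.mpr (hcd.trans hdR).le)
      (fun x hx => ((hu x (lt_of_lt_of_le hc hx.1)).continuousAt).continuousWithinAt)
    have hr₁gt : u c < u r₁ := by
      have := hr₁max ⟨hcd.le, hdR.le⟩
      simp only [mem_setOf_eq] at this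
      linarith [hd1]
    have hr₁Ioo : r₁ ∈ Ioo c R := by
      constructor
      · rcases hr₁mem.1.lt_or_eq with h1 | h1
        · exact h1
        · exfalso; rw [← h1] at hr₁gt; exact lt_irrefl _ hr₁gt
      · rcases hr₁mem.2.lt_or_eq with h2 | h2
        · exact h2
        · exfalso; rw [h2] at hr₁gt; linarith [hR1]
    have hr₁pos : 0 < r₁ := hc.trans hr₁Ioo.1
    have hr₁loc : IsLocalMax u r₁ := hr₁max.isLocalMax (Icc_mem_nhds hr₁Ioo.1 hr₁Ioo.2)
    -- derivatives vanish at local extrema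
    have hdu0 : u' r₀ = 0 := hr₀loc.hasDerivAt_eq_zero (hu r₀ hr₀pos)
    have hdu1 : u' r₁ = 0 := hr₁loc.hasDerivAt_eq_zero (hu r₁ hr₁pos)
    -- sign of U2 at r₀ : U2 r₀ ≥ 0
    have hQ0 : 0 ≤ U2 r₀ := by
      by_contra hcon2
      push_neg at hcon2
      have hev : ∀ᶠ x in 𝓝[>] r₀, u' x < 0 ∧ u r₀ ≤ u x :=
        (aux_ev_right_neg (hu' r₀ hr₀pos) hdu0 hcon2).and
          ((hr₀loc : ∀ᶠ x in 𝓝 r₀, u r₀ ≤ u x).filter_mono nhdsWithin_le_nhds)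
      obtain ⟨b, hb, hbsub⟩ := mem_nhdsGT_iff_exists_Ioc_subset.mp hev
      obtain ⟨ξ, hξ, hξ2⟩ := exists_hasDerivAt_eq_slope u u' hb
        (fun x hx => ((hu x (lt_of_lt_of_le hr₀pos hx.1)).continuousAt).continuousWithinAt)
        (fun x hx => hu x (hr₀pos.trans hx.1))
      have h1 : u' ξ < 0 := (hbsub ⟨hξ.1, hξ.2.le⟩).1
      have h2 : u r₀ ≤ u b := (hbsub ⟨hb, le_refl b⟩).2
      have hbr : 0 < b - r₀ := sub_pos.mpr hb
      rw [hξ2] at h1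
      have h3 : (0:ℝ) ≤ (u b - u r₀) / (b - r₀) :=
        div_nonneg (by linarith) hbr.le
      linarith
    -- sign of U2 at r₁ : U2 r₁ ≤ 0
    have hQ1 : U2 r₁ ≤ 0 := by
      by_contra hcon2
      push_neg at hcon2
      have hev : ∀ᶠ x in 𝓝[>] r₁, 0 < u' x ∧ u x ≤ u r₁ :=
        (aux_ev_right_pos (hu' r₁ hr₁pos) hdu1 hcon2).and
          ((hr₁loc : ∀ᶠ x in 𝓝 r₁, u x ≤ u r₁).filter_mono nhdsWithin_le_nhds)
      obtain ⟨b, hb, hbsub⟩ := mem_nhdsGT_iff_exists_Ioc_subset.mp hev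
      obtain ⟨ξ, hξ, hξ2⟩ := exists_hasDerivAt_eq_slope u u' hb
        (fun x hx => ((hu x (lt_of_lt_of_le hr₁pos hx.1)).continuousAt).continuousWithinAt)
        (fun x hx => hu x (hr₁pos.trans hx.1))
      have h1 : 0 < u' ξ := (hbsub ⟨hξ.1, hξ.2.le⟩).1
      have h2 : u b ≤ u r₁ := (hbsub ⟨hb, le_refl b⟩).2
      have hbr : 0 < b - r₁ := sub_pos.mpr hb
      rw [hξ2] at h1
      have h3 : (u b - u r₁) / (b - r₁) ≤ 0 :=
        div_nonpos_of_nonpos_of_nonneg (by linarith) hbr.le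
      linarith
    -- derive the contradiction : U2 r₀ < U2 r₁ is impossible with both signs
    obtain ⟨h0a, h0b, h0c, h0d⟩ := hbounds r₀ hr₀pos
    obtain ⟨h1a, h1b, h1c, h1d⟩ := hbounds r₁ hr₁pos
    have huu : u r₀ < u r₁ := hr₀lt.trans hr₁gt
    have hff : f r₀ < f r₁ := hfmono hr₀pos (hc.trans hr₁Ioo.1) (hr₀Ioo.2.trans hr₁Ioo.1)
    have hrr : r₀ < r₁ := hr₀Ioo.2.trans hr₁Ioo.1
    -- Q at a point : U2 r = (αβ/2 f² + (u²-1)/r²) * u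
    have hQform : ∀ r : ℝ, 0 < r →
        U2 r = (α * β / 2 * f r ^ 2 + (u r ^ 2 - 1) / r ^ 2) * u r := by
      intro r hr
      simp only [hU2]
      ring
    have hQ0' : 0 ≤ α * β / 2 * f r₀ ^ 2 + (u r₀ ^ 2 - 1) / r₀ ^ 2 := by
      by_contra hcon2
      push_neg at hcon2
      have := mul_neg_of_neg_of_pos hcon2 h0a
      rw [← hQform r₀ hr₀pos] at this
      linarith
    have hQ1' : α * β / 2 * f r₁ ^ 2 + (u r₁ ^ 2 - 1) / r₁ ^ 2 ≤ 0 := by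
      by_contra hcon2
      push_neg at hcon2
      have := mul_pos hcon2 h1a
      rw [← hQform r₁ hr₁pos] at this
      linarith
    have key1 : (u r₀ ^ 2 - 1) / r₀ ^ 2 < (u r₁ ^ 2 - 1) / r₁ ^ 2 := by
      rw [div_lt_div_iff₀ (by positivity) (by positivity)]
      have hn : u r₀ ^ 2 - 1 < 0 := by
        have : u r₀ ^ 2 < 1 ^ 2 := pow_lt_pow_left₀ h0b h0a.le (by norm_num)
        simpa using this
      have hm : u r₀ ^ 2 < u r₁ ^ 2 := pow_lt_pow_left₀ huu h0a.le (by norm_num)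
      have hr2 : r₀ ^ 2 < r₁ ^ 2 := pow_lt_pow_left₀ hrr hr₀pos.le (by norm_num)
      have e1 : (u r₀ ^ 2 - 1) * r₁ ^ 2 < (u r₀ ^ 2 - 1) * r₀ ^ 2 :=
        mul_lt_mul_of_neg_left hr2 hn
      have e2 : (u r₀ ^ 2 - 1) * r₀ ^ 2 < (u r₁ ^ 2 - 1) * r₀ ^ 2 :=
        mul_lt_mul_of_pos_right (by linarith) (by positivity)
      linarith
    have key2 : α * β / 2 * f r₀ ^ 2 < α * β / 2 * f r₁ ^ 2 := by
      have hαβ : 0 < α * β / 2 := by positivity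
      exact mul_lt_mul_of_pos_left (pow_lt_pow_left₀ hff h0c.le (by norm_num)) hαβ
    linarith
  -- Step C : u' < 0 on (0,∞)
  have hult : ∀ r : ℝ, 0 < r → u' r < 0 := by
    intro c hc
    rcases lt_or_eq_of_le (hune c hc) with h | h
    · exact h
    exfalso
    -- h : u' c = 0
    rcases lt_trichotomy (U2 c) 0 with hV | hV | hV
    · -- u'' < 0 at c : u' > 0 just left of c, contradiction
      obtain ⟨x, hx1, hx2⟩ := ((aux_ev_left_pos (hu' c hc) h hV).and
        ((eventually_gt_nhds hc).filter_mono nhdsWithin_le_nhds)).exists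
      linarith [hune x hx2]
    · -- U2 c = 0 : third derivative argument
      obtain ⟨uc0, uc1, fc0, fc1⟩ := hbounds c hc
      have hfc := hf c hc
      have huc := hu c hc
      have hD : HasDerivAt U2
          (α * β * f c * f' c * u c + 2 * u c * (1 - u c ^ 2) / c ^ 3) c := by
        have h1 : HasDerivAt (fun r => α * β / 2 * f r ^ 2 * u r)
            (α * β / 2 * ((2:ℕ) * f c ^ 1 * f' c) * u c + α * β / 2 * f c ^ 2 * u' c) c :=
          ((hfc.pow 2).const_mul (α * β / 2)).mul huc
        have h2 : HasDerivAt (fun r : ℝ => u r * (u r ^ 2 - 1))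
            (u' c * (u c ^ 2 - 1) + u c * ((2:ℕ) * u c ^ 1 * u' c)) c :=
          huc.mul ((huc.pow 2).sub_const 1)
        have h3 : HasDerivAt (fun r : ℝ => r ^ 2) ((2:ℕ) * c ^ 1) c := hasDerivAt_pow 2 c
        have h4 := h2.div h3 (by positivity : c ^ 2 ≠ 0)
        have h5 := h1.add h4
        rw [hU2]
        convert h5 using 1
        · rfl
        · rfl
        · rfl
        rw [h]
        push_cast
        field_simp
        ring
      have hDpos : 0 < α * β * f c * f' c * u c + 2 * u c * (1 - u c ^ 2) / c ^ 3 := by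
        have t1 : 0 < α * β * f c * f' c * u c :=
          mul_pos (mul_pos (mul_pos (mul_pos hα hβ) fc0) (hfpos c hc)) uc0
        have t2 : 0 < 2 * u c * (1 - u c ^ 2) / c ^ 3 :=
          div_pos (by nlinarith) (by positivity)
        linarith
      -- U2 < 0 just left of c, so u' is strictly decreasing there, giving u' > 0
      have hev : ∀ᶠ x in 𝓝[<] c, U2 x < 0 ∧ 0 < x :=
        (aux_ev_left_neg hD hV hDpos).and
          ((eventually_gt_nhds hc).filter_mono nhdsWithin_le_nhds)
      obtain ⟨a, ha, hasub⟩ := mem_nhdsLT_iff_exists_Ico_subset.mp hev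
      have hapos : 0 < a := (hasub ⟨le_refl a, ha⟩).2
      obtain ⟨ξ, hξ, hξ2⟩ := exists_hasDerivAt_eq_slope u' U2 ha
        (fun x hx => ((hu' x (lt_of_lt_of_le hapos hx.1)).continuousAt).continuousWithinAt)
        (fun x hx => hu' x (hapos.trans hx.1))
      have hξneg : U2 ξ < 0 := (hasub ⟨hξ.1.le, hξ.2⟩).1
      have hca : 0 < c - a := sub_pos.mpr ha
      rw [hξ2] at hξneg
      have h7 : u' c - u' a < 0 := by
        rcases div_neg_iff.mp hξneg with ⟨_, h'⟩ | ⟨h', _⟩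
        · linarith
        · linarith
      have h8 := hune a hapos
      rw [← h] at h7
      linarith
    · -- u'' > 0 at c : u' > 0 just right of c, contradiction
      obtain ⟨x, hx1, hx2⟩ := ((aux_ev_right_pos (hu' c hc) h hV).and
        ((eventually_gt_nhds hc).filter_mono nhdsWithin_le_nhds)).exists
      linarith [hune x hx2]
  refine ⟨hfpos, ?_⟩
  apply strictAntiOn_of_deriv_neg (convex_Ioi 0)
  · exact fun x hx => ((hu x hx).continuousAt).continuousWithinAt
  · intro x hx
    rw [interior_Ioi] at hx
    rw [(hu x hx).deriv]
    exact hult x hx
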